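/- The elements a := (M_Z M_X M_Y)², b := (M_X M_Y M_Z)², c := (M_Y M_Z M_X)² of G each have order 4, commute pairwise, and satisfy a·b·c = 1; the subgroup H of G generated by a and b is normal in G, has order 16, and is isomorphic to ℤ/4 × ℤ/4. -/

import Mathlib

open Matrix

/-- The matrix of the dualization functor `X` acting on `(γ,β,α,λ,μ,ν)`. -/
def MXmat : Matrix (Fin 6) (Fin 6) ℤ :=
  !![0,0,0,0,-1,0; 0,0,0,0,0,-1; 0,0,1,0,0,0; 0,0,0,-1,0,0; -1,0,0,0,0,0; 0,-1,0,0,0,0]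

/-- The matrix of the dualization functor `Y`. -/
def MYmat : Matrix (Fin 6) (Fin 6) ℤ :=
  !![0,0,0,-1,0,0; 0,1,0,0,0,0; 0,0,0,0,0,-1; -1,0,0,0,0,0; 0,0,0,0,-1,0; 0,0,-1,0,0,0]

/-- The matrix of the dualization functor `Z`. -/
def MZmat : Matrix (Fin 6) (Fin 6) ℤ :=
  !![1,0,0,0,0,0; 0,0,0,-1,0,0; 0,0,0,0,-1,0; 0,-1,0,0,0,0; 0,0,-1,0,0,0; 0,0,0,0,0,-1]

/-- `M_X` as an element of `GL(6,ℤ)` (it is an involution, so it is its own inverse). -/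
def MX : GL (Fin 6) ℤ := ⟨MXmat, MXmat, by decide, by decide⟩

/-- `M_Y` as an element of `GL(6,ℤ)`. -/
def MY : GL (Fin 6) ℤ := ⟨MYmat, MYmat, by decide, by decide⟩

/-- `M_Z` as an element of `GL(6,ℤ)`. -/
def MZ : GL (Fin 6) ℤ := ⟨MZmat, MZmat, by decide, by decide⟩

/-- The subgroup of `GL(6,ℤ)` generated by `M_X`, `M_Y`, `M_Z`: a faithful model of the
duality group `DF₃` of triple vector bundles. -/
def G : Subgroup (GL (Fin 6) ℤ) := Subgroup.closure {MX, MY, MZ}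

lemma hMX : MX ∈ G := Subgroup.subset_closure (by simp)
lemma hMY : MY ∈ G := Subgroup.subset_closure (by simp)
lemma hMZ : MZ ∈ G := Subgroup.subset_closure (by simp)

def g₁ : GL (Fin 6) ℤ := (MX * MY * MX * MZ) ^ 2
def g₂ : GL (Fin 6) ℤ := (MY * MZ * MY * MX) ^ 2
def g₃ : GL (Fin 6) ℤ := (MZ * MX * MZ * MY) ^ 2

lemma hg₁ : g₁ ∈ G :=
  G.pow_mem (G.mul_mem (G.mul_mem (G.mul_mem hMX hMY) hMX) hMZ) 2
lemma hg₂ : g₂ ∈ G :=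
  G.pow_mem (G.mul_mem (G.mul_mem (G.mul_mem hMY hMZ) hMY) hMX) 2
lemma hg₃ : g₃ ∈ G :=
  G.pow_mem (G.mul_mem (G.mul_mem (G.mul_mem hMZ hMX) hMZ) hMY) 2

def a : GL (Fin 6) ℤ := (MZ * MX * MY) ^ 2
def b : GL (Fin 6) ℤ := (MX * MY * MZ) ^ 2
def c : GL (Fin 6) ℤ := (MY * MZ * MX) ^ 2

-- auxiliary section to insert above the theorem

abbrev K : Subgroup (GL (Fin 6) ℤ) := Subgroup.closure {a, b}

lemma ha : a ∈ K := Subgroup.subset_closure (by simp)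
lemma hb : b ∈ K := Subgroup.subset_closure (by simp)

lemma ha4 : a ^ 4 = 1 := by decide
lemma hb4 : b ^ 4 = 1 := by decide
lemma hc4 : c ^ 4 = 1 := by decide
lemma ha2 : a ^ 2 ≠ 1 := by decide
lemma hb2 : b ^ 2 ≠ 1 := by decide
lemma hc2 : c ^ 2 ≠ 1 := by decide

lemma orda : orderOf a = 4 := by
  have := orderOf_eq_prime_pow (p := 2) (n := 1) (x := a) (by norm_num [ha2]) (by norm_num [ha4])
  simpa using this
lemma ordb : orderOf b = 4 := by
  have := orderOf_eq_prime_pow (p := 2) (n := 1) (x := b) (by norm_num [hb2]) (by norm_num [hb4])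
  simpa using this
lemma ordc : orderOf c = 4 := by
  have := orderOf_eq_prime_pow (p := 2) (n := 1) (x := c) (by norm_num [hc2]) (by norm_num [hc4])
  simpa using this

lemma hcab : Commute a b := (by decide : a * b = b * a)

/-- The homomorphism `Multiplicative (ZMod 4) →* GL(6,ℤ)` sending the generator to `x`,
given `x ^ 4 = 1`. -/
noncomputable def pow4 (x : GL (Fin 6) ℤ) (hx : x ^ 4 = 1) :
    Multiplicative (ZMod 4) →* GL (Fin 6) ℤ :=
  AddMonoidHom.toMultiplicativeLeft
    (ZMod.lift 4 ⟨zmultiplesHom _ (Additive.ofMul x), by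
      show ((4 : ℤ) • Additive.ofMul x) = 0
      rw [← ofMul_zpow, show ((4 : ℤ)) = ((4 : ℕ) : ℤ) by norm_num, zpow_natCast, hx]
      rfl⟩)

lemma pow4_apply (x : GL (Fin 6) ℤ) (hx : x ^ 4 = 1) (n : ℤ) :
    pow4 x hx (Multiplicative.ofAdd ((n : ZMod 4))) = x ^ n := by
  simp only [pow4, AddMonoidHom.coe_toMultiplicativeLeft, Function.comp_apply, toAdd_ofAdd]
  rw [ZMod.lift_coe]
  rfl

noncomputable def ψ : Multiplicative (ZMod 4) × Multiplicative (ZMod 4) →* GL (Fin 6) ℤ :=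
  MonoidHom.noncommCoprod (pow4 a ha4) (pow4 b hb4) (by
    intro m n
    obtain ⟨i, rfl⟩ := Multiplicative.ofAdd.surjective m
    obtain ⟨j, rfl⟩ := Multiplicative.ofAdd.surjective n
    obtain ⟨i, rfl⟩ := ZMod.intCast_surjective i
    obtain ⟨j, rfl⟩ := ZMod.intCast_surjective j
    rw [pow4_apply, pow4_apply]
    exact hcab.zpow_zpow i j)

lemma ψ_apply (i j : ℤ) :
    ψ (Multiplicative.ofAdd ((i : ZMod 4)), Multiplicative.ofAdd ((j : ZMod 4))) =
      a ^ i * b ^ j := by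
  rw [ψ, MonoidHom.noncommCoprod_apply, pow4_apply, pow4_apply]

lemma key16 : ∀ i j : Fin 4, a ^ (i : ℕ) * b ^ (j : ℕ) = 1 → i = 0 ∧ j = 0 := by decide

lemma ψ_inj : Function.Injective ψ := by
  rw [injective_iff_map_eq_one]
  rintro ⟨x, y⟩ h
  obtain ⟨i, rfl⟩ := Multiplicative.ofAdd.surjective x
  obtain ⟨j, rfl⟩ := Multiplicative.ofAdd.surjective y
  have hi : ((i.val : ℤ) : ZMod 4) = i := by
    push_cast
    rw [ZMod.natCast_val, ZMod.cast_id]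
  have hj : ((j.val : ℤ) : ZMod 4) = j := by
    push_cast
    rw [ZMod.natCast_val, ZMod.cast_id]
  rw [← hi, ← hj, ψ_apply] at h
  have h' : a ^ (i.val : ℕ) * b ^ (j.val : ℕ) = 1 := by
    rw [← zpow_natCast a, ← zpow_natCast b]; exact h
  have := key16 ⟨i.val, i.val_lt⟩ ⟨j.val, j.val_lt⟩ h'
  have hi0 : i = 0 := by
    have hv : i.val = 0 := congrArg Fin.val this.1
    rw [← hi, hv]; rfl
  have hj0 : j = 0 := by
    have hv : j.val = 0 := congrArg Fin.val this.2
    rw [← hj, hv]; rfl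
  simp [hi0, hj0]

lemma ψ_range : ψ.range = K := by
  apply le_antisymm
  · rintro _ ⟨⟨x, y⟩, rfl⟩
    obtain ⟨i, rfl⟩ := Multiplicative.ofAdd.surjective x
    obtain ⟨j, rfl⟩ := Multiplicative.ofAdd.surjective y
    obtain ⟨i, rfl⟩ := ZMod.intCast_surjective i
    obtain ⟨j, rfl⟩ := ZMod.intCast_surjective j
    rw [ψ_apply]
    exact K.mul_mem (K.zpow_mem ha i) (K.zpow_mem hb j)
  · rw [Subgroup.closure_le]
    rintro x (rfl | rfl)
    · exact ⟨(Multiplicative.ofAdd ((1 : ℤ) : ZMod 4), Multiplicative.ofAdd ((0 : ℤ) : ZMod 4)),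
        by rw [ψ_apply]; simp⟩
    · exact ⟨(Multiplicative.ofAdd ((0 : ℤ) : ZMod 4), Multiplicative.ofAdd ((1 : ℤ) : ZMod 4)),
        by rw [ψ_apply]; simp⟩

noncomputable def ψK : Multiplicative (ZMod 4) × Multiplicative (ZMod 4) ≃* K :=
  MulEquiv.ofBijective (ψ.codRestrict K (fun x => ψ_range ▸ (⟨x, rfl⟩ : ψ x ∈ ψ.range)))
    ⟨fun x y h => ψ_inj (congrArg Subtype.val h), by
      rintro ⟨z, hz⟩
      rw [← ψ_range] at hz
      obtain ⟨x, rfl⟩ := hz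
      exact ⟨x, rfl⟩⟩

-- conjugation relations (decidable)
lemma cXa : MX * a * MX⁻¹ = a := by decide
lemma cXb : MX * b * MX⁻¹ = a ^ 3 * b ^ 3 := by decide
lemma cYa : MY * a * MY⁻¹ = a ^ 3 * b ^ 3 := by decide
lemma cYb : MY * b * MY⁻¹ = b := by decide
lemma cZa : MZ * a * MZ⁻¹ = b := by decide
lemma cZb : MZ * b * MZ⁻¹ = a := by decide
lemma invX : MX⁻¹ = MX := by decide
lemma invY : MY⁻¹ = MY := by decide
lemma invZ : MZ⁻¹ = MZ := by decide

lemma conj_gen {g : GL (Fin 6) ℤ}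
    (h1 : g * a * g⁻¹ ∈ K) (h2 : g * b * g⁻¹ ∈ K) :
    ∀ h ∈ K, g * h * g⁻¹ ∈ K := by
  intro h hh
  induction hh using Subgroup.closure_induction with
  | mem x hx => rcases hx with rfl | rfl; exacts [h1, h2]
  | one => simpa using K.one_mem
  | mul x y _ _ px py =>
      have : g * (x * y) * g⁻¹ = (g * x * g⁻¹) * (g * y * g⁻¹) := by group
      rw [this]; exact K.mul_mem px py
  | inv x _ px =>
      have : g * x⁻¹ * g⁻¹ = (g * x * g⁻¹)⁻¹ := by group
      rw [this]; exact K.inv_mem px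

lemma conj_gen2 {g : GL (Fin 6) ℤ} (hinv : g⁻¹ = g)
    (h1 : g * a * g⁻¹ ∈ K) (h2 : g * b * g⁻¹ ∈ K) :
    (∀ h ∈ K, g * h * g⁻¹ ∈ K) ∧ (∀ h ∈ K, g⁻¹ * h * g ∈ K) := by
  refine ⟨conj_gen h1 h2, fun h hh => ?_⟩
  rw [show g⁻¹ * h * g = g * h * g⁻¹ by rw [hinv]]
  exact conj_gen h1 h2 h hh

lemma conj_mem : ∀ g ∈ G, ∀ h ∈ K, g * h * g⁻¹ ∈ K := by
  have main : ∀ g ∈ G, (∀ h ∈ K, g * h * g⁻¹ ∈ K) ∧ (∀ h ∈ K, g⁻¹ * h * g ∈ K) := by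
    intro g hg
    induction hg using Subgroup.closure_induction with
    | mem x hx =>
        rcases hx with rfl | rfl | rfl
        · exact conj_gen2 invX (by rw [cXa]; exact ha)
            (by rw [cXb]; exact K.mul_mem (K.pow_mem ha 3) (K.pow_mem hb 3))
        · exact conj_gen2 invY (by rw [cYa]; exact K.mul_mem (K.pow_mem ha 3) (K.pow_mem hb 3))
            (by rw [cYb]; exact hb)
        · exact conj_gen2 invZ (by rw [cZa]; exact hb) (by rw [cZb]; exact ha)
    | one => exact ⟨fun h hh => by simpa using hh, fun h hh => by simpa using hh⟩
    | mul x y _ _ px py =>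
        refine ⟨fun h hh => ?_, fun h hh => ?_⟩
        · rw [show x * y * h * (x * y)⁻¹ = x * (y * h * y⁻¹) * x⁻¹ by group]
          exact px.1 _ (py.1 _ hh)
        · rw [show (x * y)⁻¹ * h * (x * y) = y⁻¹ * (x⁻¹ * h * x) * y by group]
          exact py.2 _ (px.2 _ hh)
    | inv x _ px =>
        refine ⟨fun h hh => ?_, fun h hh => ?_⟩
        · rw [show x⁻¹ * h * x⁻¹⁻¹ = x⁻¹ * h * x by rw [inv_inv]]
          exact px.2 _ hh
        · rw [show x⁻¹⁻¹ * h * x⁻¹ = x * h * x⁻¹ by rw [inv_inv]]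
          exact px.1 _ hh
  exact fun g hg => (main g hg).1

/-- The elements `a = (M_Z M_X M_Y)²`, `b = (M_X M_Y M_Z)²`, `c = (M_Y M_Z M_X)²` each have
order 4, commute pairwise, and satisfy `a·b·c = 1`; the subgroup `H` generated by `a` and `b`
is normal in `G`, has order 16, and is isomorphic to `ℤ/4 × ℤ/4`. -/
theorem stmt_10 :
    orderOf a = 4 ∧ orderOf b = 4 ∧ orderOf c = 4 ∧
    Commute a b ∧ Commute a c ∧ Commute b c ∧
    a * b * c = 1 ∧
    ((Subgroup.closure {a, b}).subgroupOf G).Normal ∧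
    Nat.card (Subgroup.closure {a, b} : Subgroup (GL (Fin 6) ℤ)) = 16 ∧
    Nonempty ((Subgroup.closure {a, b} : Subgroup (GL (Fin 6) ℤ)) ≃* (Multiplicative (ZMod 4) × Multiplicative (ZMod 4))) := by
  refine ⟨orda, ordb, ordc, hcab, (by decide : a * c = c * a), (by decide : b * c = c * b),
    (by decide), ?_, ?_, ⟨ψK.symm⟩⟩
  · constructor
    intro n hn g
    rw [Subgroup.mem_subgroupOf] at hn ⊢
    simpa using conj_mem g g.2 n hn
  · rw [Nat.card_congr ψK.symm.toEquiv]
    simp [Nat.card_eq_fintype_card]
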